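/- Let N be an abelian group, let n, m ≥ 1 be integers, and let F, V : N → N be endomorphisms such that G := F ∘ V satisfies (2+mn)•G(x) − G(G(x)) = (1+mn)•x for all x ∈ N. Let H be a finite subgroup of N of exponent e with F(h) = 0 for all h ∈ H, let ρ : N → N be a homomorphism with ρ(N) ⊆ H and ρ(h) = h for all h ∈ H, and let l ≥ 1 be an integer with l·(1+mn) ≡ 1 (mod e). Define λ : N → N by λ(x) = l•V(ρ((2+mn)•F(x) − G(F(x)))). Then: (a) λ(N) ⊆ V(H); (b) λ(V(h)) = V(h) for all h ∈ H; and (c) λ(h) = 0 for all h ∈ H. In other words, λ is a retraction of N onto V(H) which vanishes on H. -/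
import Mathlib


/-- **Retraction construction in the proof of Theorem B.** Given endomorphisms `F, V` of `N`
whose composite `G = F ∘ V` satisfies `(2+mn) • G x - G (G x) = (1+mn) • x`, a finite
subgroup `H` of exponent `e` on which `F` vanishes, a retraction `ρ` of `N` onto `H`, and
`l ≥ 1` with `l(1+mn) ≡ 1 (mod e)`, the map `λ x = l • V (ρ ((2+mn) • F x - G (F x)))` is a
retraction of `N` onto `V(H)` vanishing on `H`. -/
theorem retraction_onto_shifted_copy
    (N : Type*) [AddCommGroup N] (n m : ℕ) (hn : 1 ≤ n) (hm : 1 ≤ m)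
    (F V : N →+ N)
    (hG : ∀ x : N, (2 + m * n) • F (V x) - F (V (F (V x))) = (1 + m * n) • x)
    (H : AddSubgroup N) (hHfin : Finite H)
    (e : ℕ) (he : IsLeast {k : ℕ | 1 ≤ k ∧ ∀ h ∈ H, k • h = 0} e)
    (hFH : ∀ h ∈ H, F h = 0)
    (ρ : N →+ N) (hρmem : ∀ x : N, ρ x ∈ H) (hρid : ∀ h ∈ H, ρ h = h)
    (l : ℕ) (hl : 1 ≤ l) (hle : l * (1 + m * n) ≡ 1 [MOD e])
    (lam : N → N)
    (hlam : ∀ x : N, lam x = l • V (ρ ((2 + m * n) • F x - F (V (F x))))) :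
    (∀ x : N, lam x ∈ H.map V) ∧
    (∀ h ∈ H, lam (V h) = V h) ∧
    (∀ h ∈ H, lam h = 0) := by
  have heH : ∀ h ∈ H, e • h = 0 := he.1.2
  refine ⟨?_, ?_, ?_⟩
  · intro x
    rw [hlam]
    exact AddSubgroup.nsmul_mem _ (AddSubgroup.mem_map_of_mem V (hρmem _)) l
  · intro h hh
    rw [hlam, hG, map_nsmul, hρid h hh, map_nsmul, smul_smul]
    have h1 : 1 ≤ l * (1 + m * n) :=
      le_trans hl (Nat.le_mul_of_pos_right _ (by omega))
    obtain ⟨k, hk⟩ := (Nat.modEq_iff_dvd' h1).mp hle.symm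
    have hlk : l * (1 + m * n) = 1 + e * k := by omega
    rw [hlk, add_smul, one_smul, mul_smul]
    have hz : e • k • V h = 0 := by
      rw [← map_nsmul, ← map_nsmul, heH _ (H.nsmul_mem hh k), map_zero]
    rw [hz, add_zero]
  · intro h hh
    rw [hlam, hFH h hh]
    simp
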